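/- If ε₁ = α₁ + α₂ ≠ 0 and ψ is a symmetric N-linear form maximized at unit vectors α₁,…,α_N with value Λ, then ψ(β₁, β₁, α₃, …, α_N) = Λ where β₁ = (α₁+α₂)/‖α₁+α₂‖. -/

import Mathlib

open RCLike

lemma key_lemma {𝕜 : Type*} [RCLike 𝕜] {H : Type*} [NormedAddCommGroup H]
    [InnerProductSpace 𝕜 H] (h : H →ₗ[𝕜] 𝕜) (Λ : 𝕜) (α : H) (hα : ‖α‖ = 1)
    (hb : ∀ x : H, ‖x‖ = 1 → ‖h x‖ ≤ ‖Λ‖) (hval : h α = Λ) :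
    ∀ x : H, h x = Λ * (inner 𝕜 α x : 𝕜) := by
  -- homogeneous bound
  have hb' : ∀ x : H, ‖h x‖ ≤ ‖Λ‖ * ‖x‖ := by
    intro x
    rcases eq_or_ne x 0 with rfl | hx
    · simp
    · have hnx : ‖x‖ ≠ 0 := norm_ne_zero_iff.mpr hx
      have hpos : (0:ℝ) < ‖x‖ := norm_pos_iff.mpr hx
      have hu : ‖((‖x‖⁻¹ : ℝ) : 𝕜) • x‖ = 1 := by
        rw [norm_smul, RCLike.norm_ofReal, abs_inv, abs_norm]
        field_simp
      have h1 := hb _ hu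
      rw [map_smul, smul_eq_mul, norm_mul, RCLike.norm_ofReal, abs_inv, abs_norm] at h1
      calc ‖h x‖ = ‖x‖ * (‖x‖⁻¹ * ‖h x‖) := by field_simp
        _ ≤ ‖x‖ * ‖Λ‖ := mul_le_mul_of_nonneg_left h1 (norm_nonneg x)
        _ = ‖Λ‖ * ‖x‖ := mul_comm _ _
  rcases eq_or_ne Λ 0 with rfl | hΛ0
  · intro x
    have h2 := hb' x
    simp only [norm_zero, zero_mul] at h2
    have : ‖h x‖ = 0 := le_antisymm h2 (norm_nonneg _)
    simp [norm_eq_zero.mp this]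
  -- orthogonal vanishing
  have horth : ∀ x : H, (inner 𝕜 α x : 𝕜) = 0 → h x = 0 := by
    intro x hox
    by_contra hd
    set d : ℝ := ‖h x‖ with hdd
    have hdpos : 0 < d := norm_pos_iff.mpr hd
    have hΛpos : 0 < ‖Λ‖ := norm_pos_iff.mpr hΛ0
    have spec : ∀ ε : ℝ, 0 < ε → 2 * d ^ 2 ≤ ε * (‖Λ‖ ^ 2 * d ^ 2 * ‖x‖ ^ 2) := by
      intro ε hε
      set t : 𝕜 := (ε : 𝕜) * Λ * (starRingEnd 𝕜) (h x) with ht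
      have hval2 : h (α + t • x) = Λ * ((1 + ε * d ^ 2 : ℝ) : 𝕜) := by
        rw [map_add, map_smul, hval, smul_eq_mul]
        have hc : t * h x = Λ * ((ε * d ^ 2 : ℝ) : 𝕜) := by
          rw [ht, mul_assoc, RCLike.conj_mul, ← hdd]
          push_cast
          ring
        rw [hc]
        push_cast
        ring
      have hnt : ‖t‖ = ε * ‖Λ‖ * d := by
        rw [ht, norm_mul, norm_mul, RCLike.norm_ofReal, abs_of_pos hε,
          RCLike.norm_conj, ← hdd]
      have hlhs : ‖h (α + t • x)‖ = ‖Λ‖ * (1 + ε * d ^ 2) := by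
        rw [hval2, norm_mul, RCLike.norm_ofReal, abs_of_pos]
        positivity
      have hrhs : ‖α + t • x‖ ^ 2 = 1 + ε ^ 2 * ‖Λ‖ ^ 2 * d ^ 2 * ‖x‖ ^ 2 := by
        rw [norm_add_sq (𝕜 := 𝕜), hα, inner_smul_right, hox, mul_zero,
          norm_smul, hnt]
        simp only [map_zero]
        push_cast
        ring
      have hb2 := hb' (α + t • x)
      rw [hlhs] at hb2
      have h3 : 1 + ε * d ^ 2 ≤ ‖α + t • x‖ := le_of_mul_le_mul_left (by linarith [hb2]) hΛpos
      have h4 : (1 + ε * d ^ 2) ^ 2 ≤ ‖α + t • x‖ ^ 2 := by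
        apply pow_le_pow_left₀ (by positivity) h3
      rw [hrhs] at h4
      have h5 : 2 * d ^ 2 * ε ≤ ε * (‖Λ‖ ^ 2 * d ^ 2 * ‖x‖ ^ 2) * ε := by
        nlinarith [h4, sq_nonneg (ε * d ^ 2)]
      exact le_of_mul_le_mul_right h5 hε
    set K : ℝ := ‖Λ‖ ^ 2 * ‖x‖ ^ 2 with hK
    have hKnn : 0 ≤ K := by positivity
    have := spec (1 / (K + 1)) (by positivity)
    have hK1 : (1 / (K + 1)) * K < 1 := by
      rw [div_mul_eq_mul_div, one_mul, div_lt_one (by linarith)]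
      linarith
    rw [show ‖Λ‖ ^ 2 * d ^ 2 * ‖x‖ ^ 2 = K * d ^ 2 by rw [hK]; ring] at this
    have h8 : 1 / (K + 1) * (K * d ^ 2) < d ^ 2 := by
      nlinarith [mul_lt_mul_of_pos_right hK1 (show (0:ℝ) < d ^ 2 by positivity)]
    nlinarith [pow_pos hdpos 2]
  intro x
  have hperp : (inner 𝕜 α (x - (inner 𝕜 α x : 𝕜) • α) : 𝕜) = 0 := by
    rw [inner_sub_right, inner_smul_right, inner_self_eq_norm_sq_to_K, hα]
    push_cast
    ring
  have hz := horth _ hperp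
  have : h x = (inner 𝕜 α x : 𝕜) * h α + h (x - (inner 𝕜 α x : 𝕜) • α) := by
    rw [map_sub, map_smul, smul_eq_mul]
    ring
  rw [this, hz, hval, add_zero, mul_comm]




/-- If ψ is a symmetric N-linear form maximized at unit vectors α₁,…,α_N with
value Λ and α₁ + α₂ ≠ 0, then ψ(β₁, β₁, α₃, …, α_N) = Λ where
β₁ = (α₁+α₂)/‖α₁+α₂‖. -/
theorem stmt_9 {𝕜 : Type*} [RCLike 𝕜] {H : Type*} [NormedAddCommGroup H]
    [InnerProductSpace 𝕜 H]
    (N : ℕ) (hN : 2 ≤ N)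
    (ψ : MultilinearMap 𝕜 (fun _ : Fin N => H) 𝕜)
    (hsymm : ∀ (σ : Equiv.Perm (Fin N)) (v : Fin N → H), ψ (v ∘ σ) = ψ v)
    (α : Fin N → H)
    (hα : ∀ i, ‖α i‖ = 1)
    (hmax : ∀ u : Fin N → H, (∀ i, ‖u i‖ = 1) → ‖ψ u‖ ≤ ‖ψ α‖)
    (Λ : 𝕜) (hΛ : ψ α = Λ)
    (hne : α ⟨0, by omega⟩ + α ⟨1, by omega⟩ ≠ 0) :
    ψ (fun i => if (i : ℕ) < 2 then
        ((‖α ⟨0, by omega⟩ + α ⟨1, by omega⟩‖⁻¹ : ℝ) : 𝕜) •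
          (α ⟨0, by omega⟩ + α ⟨1, by omega⟩)
      else α i) = Λ := by
  set i0 : Fin N := ⟨0, by omega⟩ with hi0
  set i1 : Fin N := ⟨1, by omega⟩ with hi1
  have hne01 : i0 ≠ i1 := by simp [hi0, hi1, Fin.ext_iff]
  set ε : H := α i0 + α i1 with hε
  set c : ℝ := ‖ε‖⁻¹ with hc
  have hεn : ‖ε‖ ≠ 0 := norm_ne_zero_iff.mpr hne
  -- bound for each slot
  have hbound : ∀ (i : Fin N) (y : H), ‖y‖ = 1 →
      ‖ψ.toLinearMap α i y‖ ≤ ‖Λ‖ := by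
    intro i y hy
    rw [MultilinearMap.toLinearMap_apply, ← hΛ]
    apply hmax
    intro j
    rcases eq_or_ne j i with rfl | hj
    · simpa using hy
    · rw [Function.update_of_ne hj]; exact hα j
  have hval : ∀ i : Fin N, ψ.toLinearMap α i (α i) = Λ := by
    intro i
    rw [MultilinearMap.toLinearMap_apply, Function.update_eq_self, hΛ]
  have h0 := key_lemma (ψ.toLinearMap α i0) Λ (α i0) (hα i0) (hbound i0) (hval i0)
  have h1 := key_lemma (ψ.toLinearMap α i1) Λ (α i1) (hα i1) (hbound i1) (hval i1)
  simp only [MultilinearMap.toLinearMap_apply] at h0 h1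
  -- rewrite target as updates
  have htgt : (fun i : Fin N => if (i : ℕ) < 2 then ((c : ℝ) : 𝕜) • ε else α i)
      = Function.update (Function.update α i1 (((c : ℝ) : 𝕜) • ε)) i0 (((c : ℝ) : 𝕜) • ε) := by
    funext j
    rcases eq_or_ne j i0 with rfl | hj0
    · simp [hi0]
    · rcases eq_or_ne j i1 with rfl | hj1
      · rw [Function.update_of_ne (Ne.symm (Ne.symm hj0)), Function.update_self]
        simp [hi1]
      · rw [Function.update_of_ne hj0, Function.update_of_ne hj1]
        have : ¬ (j : ℕ) < 2 := by
          intro h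
          interval_cases h' : (j : ℕ)
          · exact hj0 (by simp [hi0, Fin.ext_iff, h'])
          · exact hj1 (by simp [hi1, Fin.ext_iff, h'])
        simp [this]
  -- the symmetry step
  have hcomp : (Function.update (Function.update α i0 ε) i1 (α i0)) ∘ (Equiv.swap i0 i1)
      = Function.update α i1 ε := by
    funext j
    simp only [Function.comp_apply]
    rcases eq_or_ne j i0 with rfl | hj0
    · rw [Equiv.swap_apply_left, Function.update_self, Function.update_of_ne hne01]
    · rcases eq_or_ne j i1 with rfl | hj1
      · rw [Equiv.swap_apply_right, Function.update_of_ne hne01, Function.update_self,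
          Function.update_self]
      · rw [Equiv.swap_apply_of_ne_of_ne hj0 hj1, Function.update_of_ne hj1,
          Function.update_of_ne hj0, Function.update_of_ne hj1]
  have hswap : ψ (Function.update (Function.update α i0 ε) i1 (α i0))
      = ψ (Function.update α i1 ε) := by
    rw [← hsymm (Equiv.swap i0 i1) (Function.update (Function.update α i0 ε) i1 (α i0)),
      hcomp]
  -- main computation
  have hA : ψ (Function.update (Function.update α i0 ε) i1 ε)
      = Λ * ((‖ε‖ ^ 2 : ℝ) : 𝕜) := by
    have expand : ψ (Function.update (Function.update α i0 ε) i1 ε)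
        = ψ (Function.update (Function.update α i0 ε) i1 (α i0))
          + ψ (Function.update (Function.update α i0 ε) i1 (α i1)) := by
      rw [← MultilinearMap.map_update_add]
    have hT2 : ψ (Function.update (Function.update α i0 ε) i1 (α i1))
        = ψ (Function.update α i0 ε) := by
      have h5 : α i1 = (Function.update α i0 ε) i1 := by
        rw [Function.update_of_ne (Ne.symm hne01)]
      rw [h5, Function.update_eq_self]
    rw [expand, hswap, hT2, h1 ε, h0 ε, ← mul_add]
    congr 1
    rw [← inner_add_left, show α i1 + α i0 = ε by rw [hε]; abel,
      inner_self_eq_norm_sq_to_K]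
    norm_cast
  rw [htgt, MultilinearMap.map_update_smul ψ _ i0,
    Function.update_comm (Ne.symm hne01),
    MultilinearMap.map_update_smul ψ _ i1, hA, smul_eq_mul, smul_eq_mul,
    show ((c : ℝ) : 𝕜) * (((c : ℝ) : 𝕜) * (Λ * ((‖ε‖ ^ 2 : ℝ) : 𝕜)))
      = Λ * ((c * c * ‖ε‖ ^ 2 : ℝ) : 𝕜) by push_cast; ring,
    show (c * c * ‖ε‖ ^ 2 : ℝ) = 1 by rw [hc, pow_two]; field_simp]
  simp
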